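/- Let N:(0,∞)→ℝ be a differentiable nondecreasing function such that whenever N(τ) ∈ [m, m+1) for a nonnegative integer m, one has τ N'(τ) ≥ (N(τ)−m)(m+1−N(τ)). If N(τ₀) ≤ m+1−ε for some ε ∈ (0, 1/4) and nonnegative integer m, then N((ε/(1−ε))² τ₀) ≤ m + ε. -/

import Mathlib

/-- ODE comparison: quantitative frequency drop. If `N` is a nondecreasing differentiable
function on `(0,∞)` satisfying `τ N'(τ) ≥ (N(τ)−m)(m+1−N(τ))` whenever `N(τ) ∈ [m, m+1)`
for a nonnegative integer `m`, and `N(τ₀) ≤ m+1−ε` for some `ε ∈ (0,1/4)`, then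
`N((ε/(1−ε))² τ₀) ≤ m + ε`. -/
theorem statement_1 (N : ℝ → ℝ)
    (hdiff : ∀ τ : ℝ, 0 < τ → DifferentiableAt ℝ N τ)
    (hmono : MonotoneOn N (Set.Ioi (0 : ℝ)))
    (hineq : ∀ τ : ℝ, 0 < τ → ∀ m : ℕ, N τ ∈ Set.Ico (m : ℝ) ((m : ℝ) + 1) →
      (N τ - m) * ((m : ℝ) + 1 - N τ) ≤ τ * deriv N τ)
    (m : ℕ) (ε τ₀ : ℝ) (hε : ε ∈ Set.Ioo (0 : ℝ) (1 / 4)) (hτ₀ : 0 < τ₀)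
    (hN : N τ₀ ≤ (m : ℝ) + 1 - ε) :
    N ((ε / (1 - ε)) ^ 2 * τ₀) ≤ (m : ℝ) + ε := by
  obtain ⟨hε0, hε4⟩ := hε
  have hε1 : ε < 1 - ε := by linarith
  have h1ε : (0:ℝ) < 1 - ε := by linarith
  set τ₁ : ℝ := (ε / (1 - ε)) ^ 2 * τ₀ with hτ₁def
  have hr : (0:ℝ) < ε / (1 - ε) := div_pos hε0 h1ε
  have hrlt1 : ε / (1 - ε) < 1 := (div_lt_one h1ε).2 hε1
  have hτ₁pos : 0 < τ₁ := by positivity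
  have hτ₁le : τ₁ ≤ τ₀ := by
    have : (ε / (1 - ε)) ^ 2 ≤ 1 := by nlinarith
    nlinarith
  by_contra hcon
  push_neg at hcon
  -- key bounds on the closed interval
  have hmem : ∀ τ ∈ Set.Icc τ₁ τ₀, 0 < τ ∧ ε < N τ - m ∧ N τ - m ≤ 1 - ε := by
    intro τ ⟨h1, h2⟩
    have hτpos : 0 < τ := lt_of_lt_of_le hτ₁pos h1
    have hlow : N τ₁ ≤ N τ := hmono hτ₁pos hτpos h1
    have hhigh : N τ ≤ N τ₀ := hmono hτpos hτ₀ h2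
    exact ⟨hτpos, by linarith, by linarith⟩
  set g : ℝ → ℝ := fun τ => Real.log (N τ - m) - Real.log ((m:ℝ) + 1 - N τ) - Real.log τ
    with hgdef
  have hasD : ∀ τ ∈ Set.Icc τ₁ τ₀,
      HasDerivAt g (deriv N τ / (N τ - m) - (-(deriv N τ)) / ((m:ℝ) + 1 - N τ) - τ⁻¹) τ := by
    intro τ hτ
    obtain ⟨hτpos, hxlo, hxhi⟩ := hmem τ hτ
    have hx : (0:ℝ) < N τ - m := lt_trans hε0 hxlo
    have hy : (0:ℝ) < (m:ℝ) + 1 - N τ := by linarith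
    have hN' := (hdiff τ hτpos).hasDerivAt
    have h1 : HasDerivAt (fun τ => N τ - (m:ℝ)) (deriv N τ) τ := hN'.sub_const _
    have h2 : HasDerivAt (fun τ => (m:ℝ) + 1 - N τ) (-(deriv N τ)) τ := by
      exact ((hasDerivAt_const τ ((m:ℝ)+1)).sub hN').congr_deriv (zero_sub _)
    exact ((h1.log hx.ne').sub (h2.log hy.ne')).sub (Real.hasDerivAt_log hτpos.ne')
  have hderiv_nonneg : ∀ τ ∈ Set.Icc τ₁ τ₀, 0 ≤ deriv g τ := by
    intro τ hτ
    rw [(hasD τ hτ).deriv]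
    obtain ⟨hτpos, hxlo, hxhi⟩ := hmem τ hτ
    have hx : (0:ℝ) < N τ - m := lt_trans hε0 hxlo
    have hy : (0:ℝ) < (m:ℝ) + 1 - N τ := by linarith
    have hIco : N τ ∈ Set.Ico (m:ℝ) ((m:ℝ)+1) := ⟨by linarith, by linarith⟩
    have hkey := hineq τ hτpos m hIco
    have hsum : deriv N τ / (N τ - m) - (-(deriv N τ)) / ((m:ℝ) + 1 - N τ)
        = deriv N τ / ((N τ - m) * ((m:ℝ) + 1 - N τ)) := by
      field_simp
      ring
    rw [hsum]
    rw [sub_nonneg, inv_eq_one_div, div_le_div_iff₀ hτpos (by positivity)]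
    linarith
  have hcont : ContinuousOn g (Set.Icc τ₁ τ₀) := fun τ hτ =>
    ((hasD τ hτ).continuousAt).continuousWithinAt
  have hdiffg : DifferentiableOn ℝ g (interior (Set.Icc τ₁ τ₀)) := by
    intro τ hτ
    rw [interior_Icc] at hτ
    exact ((hasD τ (Set.Ioo_subset_Icc_self hτ)).differentiableAt).differentiableWithinAt
  have hmonog : MonotoneOn g (Set.Icc τ₁ τ₀) := by
    apply monotoneOn_of_deriv_nonneg (convex_Icc τ₁ τ₀) hcont hdiffg
    intro τ hτ
    rw [interior_Icc] at hτ
    exact hderiv_nonneg τ (Set.Ioo_subset_Icc_self hτ)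
  have hg := hmonog (Set.left_mem_Icc.2 hτ₁le) (Set.right_mem_Icc.2 hτ₁le) hτ₁le
  -- evaluate bounds
  obtain ⟨_, hx1lo, hx1hi⟩ := hmem τ₁ (Set.left_mem_Icc.2 hτ₁le)
  obtain ⟨_, hx0lo, hx0hi⟩ := hmem τ₀ (Set.right_mem_Icc.2 hτ₁le)
  have hx1 : (0:ℝ) < N τ₁ - m := lt_trans hε0 hx1lo
  have hy1 : (0:ℝ) < (m:ℝ) + 1 - N τ₁ := by linarith
  have hx0 : (0:ℝ) < N τ₀ - m := lt_trans hε0 hx0lo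
  have hy0 : (0:ℝ) < (m:ℝ) + 1 - N τ₀ := by linarith
  have l1 : Real.log ε < Real.log (N τ₁ - m) := Real.log_lt_log hε0 hx1lo
  have l2 : Real.log ((m:ℝ) + 1 - N τ₁) < Real.log (1 - ε) :=
    Real.log_lt_log hy1 (by linarith)
  have l3 : Real.log (N τ₀ - m) ≤ Real.log (1 - ε) := Real.log_le_log hx0 hx0hi
  have l4 : Real.log ε ≤ Real.log ((m:ℝ) + 1 - N τ₀) := Real.log_le_log hε0 (by linarith)
  have lτ : Real.log τ₁ = 2 * (Real.log ε - Real.log (1 - ε)) + Real.log τ₀ := by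
    rw [hτ₁def, Real.log_mul (by positivity) hτ₀.ne', Real.log_pow,
      Real.log_div hε0.ne' h1ε.ne']
    push_cast
    ring
  simp only [hgdef] at hg
  linarith
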